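/- For any complex sequence x with ∑ |x_k x_{k+1}| < ∞, the series defining 𝔉(x) = 1 + ∑_{m=1}^∞ (-1)^m ∑_{k_1≥1} ∑_{k_2≥k_1+2} … ∑_{k_m≥k_{m-1}+2} x_{k_1}x_{k_1+1}⋯x_{k_m}x_{k_m+1} converges absolutely and satisfies |𝔉(x)| ≤ exp(∑_{k=1}^∞ |x_k x_{k+1}|). -/

import Mathlib

open scoped BigOperators

/-- Admissible index tuples: k₁ ≥ 1 and k_{i+1} ≥ k_i + 2. -/
def FAdm (m : ℕ) (k : Fin m → ℕ) : Prop :=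
  (∀ i, 1 ≤ k i) ∧ ∀ i j : Fin m, (i : ℕ) + 1 = (j : ℕ) → k i + 2 ≤ k j

/-- The function 𝔉 defined by the alternating multiple series
`𝔉(x) = 1 + ∑_{m≥1} (-1)^m ∑_{k₁≥1, k_{i+1}≥k_i+2} x_{k₁}x_{k₁+1}⋯x_{k_m}x_{k_m+1}`
(the term `m = 0` contributes the leading `1`). The sequence `x` is indexed so that
`x k` is `x_k` for `k ≥ 1`. -/
noncomputable def Fcal (x : ℕ → ℂ) : ℂ :=
  ∑' p : (Σ m : ℕ, { k : Fin m → ℕ // FAdm m k }),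
    (-1 : ℂ) ^ p.1 * ∏ i, x (p.2.1 i) * x (p.2.1 i + 1)

lemma FAdm.strictMono {m : ℕ} {k : Fin m → ℕ} (hk : FAdm m k) : StrictMono k := by
  cases m with
  | zero => exact fun i => i.elim0
  | succ m =>
    refine Fin.strictMono_iff_lt_succ.2 fun i => ?_
    have := hk.2 i.castSucc i.succ (by simp)
    omega

open scoped ENNReal NNReal

lemma tsum_pi_prod (A : ℕ → ℝ≥0∞) : ∀ m : ℕ,
    ∑' t : Fin m → ℕ, ∏ i, A (t i) = (∑' n, A n) ^ m := by
  intro m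
  induction m with
  | zero => simp [tsum_fintype]
  | succ m ih =>
    calc ∑' t : Fin (m + 1) → ℕ, ∏ i, A (t i)
        = ∑' q : ℕ × (Fin m → ℕ), ∏ i, A ((Fin.consEquiv fun _ : Fin (m + 1) => ℕ) q i) :=
          (((Fin.consEquiv fun _ : Fin (m + 1) => ℕ)).tsum_eq fun t => ∏ i, A (t i)).symm
      _ = ∑' q : ℕ × (Fin m → ℕ), A q.1 * ∏ i, A (q.2 i) := by
          refine tsum_congr fun q => ?_
          simp [Fin.consEquiv, Fin.prod_univ_succ]
      _ = ∑' n : ℕ, ∑' t : Fin m → ℕ, A n * ∏ i, A (t i) := ENNReal.tsum_prod'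
      _ = ∑' n : ℕ, A n * ∑' t : Fin m → ℕ, ∏ i, A (t i) := by
          refine tsum_congr fun n => ?_
          rw [ENNReal.tsum_mul_left]
      _ = (∑' n, A n) ^ (m + 1) := by
          rw [ih, ENNReal.tsum_mul_right, pow_succ, mul_comm]

/-- If `∑_{k≥1} |x_k x_{k+1}| < ∞`, the multiple series defining `𝔉(x)` converges
absolutely and `|𝔉(x)| ≤ exp (∑_{k≥1} |x_k x_{k+1}|)`. -/
theorem stmt_0 (x : ℕ → ℂ) (hx : Summable fun k : ℕ => ‖x (k + 1) * x (k + 2)‖) :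
    Summable (fun p : (Σ m : ℕ, { k : Fin m → ℕ // FAdm m k }) =>
      ‖(-1 : ℂ) ^ p.1 * ∏ i, x (p.2.1 i) * x (p.2.1 i + 1)‖) ∧
    ‖Fcal x‖ ≤ Real.exp (∑' k : ℕ, ‖x (k + 1) * x (k + 2)‖) := by
  classical
  set a : ℕ → ℝ := fun n => ‖x (n + 1) * x (n + 2)‖ with ha_def
  have ha0 : ∀ n, 0 ≤ a n := fun n => norm_nonneg _
  set s : ℝ := ∑' n, a n with hs_def
  have hs0 : 0 ≤ s := tsum_nonneg ha0
  set A : ℕ → ℝ≥0∞ := fun n => ENNReal.ofReal (a n) with hA_def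
  have hSA : (∑' n, A n) = ENNReal.ofReal s :=
    (ENNReal.ofReal_tsum_of_nonneg ha0 hx).symm
  -- norm of each term
  have hterm : ∀ p : (Σ m : ℕ, { k : Fin m → ℕ // FAdm m k }),
      ‖(-1 : ℂ) ^ p.1 * ∏ i, x (p.2.1 i) * x (p.2.1 i + 1)‖ = ∏ i, a (p.2.1 i - 1) := by
    rintro ⟨m, k, hk⟩
    simp only [norm_mul, norm_pow, norm_neg, norm_one, one_pow, one_mul, norm_prod]
    refine Finset.prod_congr rfl fun i _ => ?_
    have h1 : 1 ≤ k i := hk.1 i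
    have e1 : k i - 1 + 1 = k i := by omega
    have e2 : k i - 1 + 2 = k i + 1 := by omega
    have : a (k i - 1) = ‖x (k i - 1 + 1) * x (k i - 1 + 2)‖ := rfl
    rw [this, e1, e2, norm_mul]
  have htermE : ∀ p : (Σ m : ℕ, { k : Fin m → ℕ // FAdm m k }),
      ENNReal.ofReal (‖(-1 : ℂ) ^ p.1 * ∏ i, x (p.2.1 i) * x (p.2.1 i + 1)‖)
        = ∏ i, A (p.2.1 i - 1) := by
    intro p
    rw [hterm p, ENNReal.ofReal_prod_of_nonneg (fun i _ => ha0 _)]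
  -- key bound per level m
  have key : ∀ m : ℕ,
      (∑' k : { k : Fin m → ℕ // FAdm m k }, ∏ i, A (k.1 i - 1))
        ≤ (ENNReal.ofReal s) ^ m / (m.factorial : ℝ≥0∞) := by
    intro m
    set j : Equiv.Perm (Fin m) × { k : Fin m → ℕ // FAdm m k } → (Fin m → ℕ) :=
      fun q => fun i => q.2.1 (q.1 i) - 1 with hj_def
    have hinj : Function.Injective j := by
      rintro ⟨σ, k, hk⟩ ⟨τ, l, hl⟩ h
      have h' : ∀ i, k (σ i) = l (τ i) := by
        intro i
        have := congrFun h i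
        simp only [hj_def] at this
        have h1 := hk.1 (σ i); have h2 := hl.1 (τ i)
        omega
      have hkm := hk.strictMono
      have hlm := hl.strictMono
      have hr : Set.range k = Set.range l := by
        ext n; constructor
        · rintro ⟨i, rfl⟩
          exact ⟨τ (σ.symm i), by rw [← h' (σ.symm i), Equiv.apply_symm_apply]⟩
        · rintro ⟨i, rfl⟩
          exact ⟨σ (τ.symm i), by rw [h' (τ.symm i), Equiv.apply_symm_apply]⟩
      have hkl : k = l := (@StrictMono.range_inj (Fin m) ℕ _ _ (inferInstance : WellFoundedLT (Fin m)) k l hkm hlm).1 hr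
      subst hkl
      have hστ : σ = τ := by
        ext i
        exact Fin.val_eq_of_eq (hkm.injective (h' i))
      simp [hστ]
    have h1 : ∑' q : Equiv.Perm (Fin m) × { k : Fin m → ℕ // FAdm m k },
        ∏ i, A (j q i) ≤ (ENNReal.ofReal s) ^ m := by
      calc ∑' q, ∏ i, A (j q i) ≤ ∑' t : Fin m → ℕ, ∏ i, A (t i) :=
            ENNReal.tsum_comp_le_tsum_of_injective hinj (fun t => ∏ i, A (t i))
        _ = (ENNReal.ofReal s) ^ m := by rw [tsum_pi_prod, hSA]
    have h2 : ∑' q : Equiv.Perm (Fin m) × { k : Fin m → ℕ // FAdm m k },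
        ∏ i, A (j q i)
        = (m.factorial : ℝ≥0∞) * ∑' k : { k : Fin m → ℕ // FAdm m k }, ∏ i, A (k.1 i - 1) := by
      rw [ENNReal.tsum_prod']
      have : ∀ σ : Equiv.Perm (Fin m),
          ∑' k : { k : Fin m → ℕ // FAdm m k }, ∏ i, A (j (σ, k) i)
            = ∑' k : { k : Fin m → ℕ // FAdm m k }, ∏ i, A (k.1 i - 1) := by
        intro σ
        refine tsum_congr fun k => ?_
        simpa [hj_def] using Equiv.prod_comp σ (fun i => A (k.1 i - 1))
      calc ∑' σ, ∑' k : { k : Fin m → ℕ // FAdm m k }, ∏ i, A (j (σ, k) i)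
          = ∑' _ : Equiv.Perm (Fin m),
              ∑' k : { k : Fin m → ℕ // FAdm m k }, ∏ i, A (k.1 i - 1) :=
            tsum_congr this
        _ = (m.factorial : ℝ≥0∞) * ∑' k : { k : Fin m → ℕ // FAdm m k }, ∏ i, A (k.1 i - 1) := by
            rw [tsum_fintype, Finset.sum_const, Finset.card_univ, Fintype.card_perm,
              Fintype.card_fin, nsmul_eq_mul]
    rw [h2] at h1
    rw [ENNReal.le_div_iff_mul_le (Or.inl (by positivity)) (Or.inl (by simp))]
    rw [mul_comm]
    exact h1
  -- total bound in ℝ≥0∞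
  have hsum_exp : Summable fun m : ℕ => s ^ m / (m.factorial : ℝ) :=
    Real.summable_pow_div_factorial s
  have hRHS : (∑' m : ℕ, (ENNReal.ofReal s) ^ m / (m.factorial : ℝ≥0∞))
      = ENNReal.ofReal (Real.exp s) := by
    have h1 : ∀ m : ℕ, (ENNReal.ofReal s) ^ m / (m.factorial : ℝ≥0∞)
        = ENNReal.ofReal (s ^ m / (m.factorial : ℝ)) := by
      intro m
      rw [ENNReal.ofReal_div_of_pos (by positivity), ← ENNReal.ofReal_pow hs0,
        ENNReal.ofReal_natCast]
    rw [tsum_congr h1, ← ENNReal.ofReal_tsum_of_nonneg (fun m => by positivity) hsum_exp]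
    congr 1
    rw [Real.exp_eq_exp_ℝ, NormedSpace.exp_eq_tsum_div]
  have hT : (∑' p : (Σ m : ℕ, { k : Fin m → ℕ // FAdm m k }),
      ∏ i, A (p.2.1 i - 1)) ≤ ENNReal.ofReal (Real.exp s) := by
    rw [ENNReal.tsum_sigma']
    exact le_trans (ENNReal.tsum_le_tsum fun m => key m) (le_of_eq hRHS)
  -- summability
  have hcoe : ∀ p : (Σ m : ℕ, { k : Fin m → ℕ // FAdm m k }),
      ((‖(-1 : ℂ) ^ p.1 * ∏ i, x (p.2.1 i) * x (p.2.1 i + 1)‖₊ : ℝ≥0) : ℝ≥0∞)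
        = ∏ i, A (p.2.1 i - 1) := by
    intro p
    rw [← htermE p]
    exact (ofReal_norm _).symm
  have hTne : (∑' p : (Σ m : ℕ, { k : Fin m → ℕ // FAdm m k }),
      ((‖(-1 : ℂ) ^ p.1 * ∏ i, x (p.2.1 i) * x (p.2.1 i + 1)‖₊ : ℝ≥0) : ℝ≥0∞)) ≠ ⊤ := by
    rw [tsum_congr hcoe]
    exact ne_top_of_le_ne_top ENNReal.ofReal_ne_top hT
  have hsummable : Summable (fun p : (Σ m : ℕ, { k : Fin m → ℕ // FAdm m k }) =>
      ‖(-1 : ℂ) ^ p.1 * ∏ i, x (p.2.1 i) * x (p.2.1 i + 1)‖) := by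
    have := ENNReal.tsum_coe_ne_top_iff_summable.1 hTne
    exact NNReal.summable_coe.2 this
  refine ⟨hsummable, ?_⟩
  have hnorm : ‖Fcal x‖ ≤ ∑' p : (Σ m : ℕ, { k : Fin m → ℕ // FAdm m k }),
      ‖(-1 : ℂ) ^ p.1 * ∏ i, x (p.2.1 i) * x (p.2.1 i + 1)‖ :=
    norm_tsum_le_tsum_norm hsummable
  refine le_trans hnorm ?_
  have hofReal : ENNReal.ofReal (∑' p : (Σ m : ℕ, { k : Fin m → ℕ // FAdm m k }),
      ‖(-1 : ℂ) ^ p.1 * ∏ i, x (p.2.1 i) * x (p.2.1 i + 1)‖) ≤ ENNReal.ofReal (Real.exp s) := by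
    rw [ENNReal.ofReal_tsum_of_nonneg (fun p => norm_nonneg _) hsummable]
    rw [tsum_congr htermE]
    exact hT
  exact (ENNReal.ofReal_le_ofReal_iff (Real.exp_nonneg s)).1 hofReal
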